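/- Let p be prime and ξ ∈ ℂ a primitive p-th root of unity. Then every square submatrix of the p × p Vandermonde matrix (ξ^{ij})_{0 ≤ i,j ≤ p−1} is invertible. (Chebotarëv's theorem on roots of unity.) -/

import Mathlib

open Finset Polynomial Matrix

private lemma coeff_comp_C_mul_X {R : Type*} [CommRing R] (f : R[X]) (a : R) (d : ℕ) :
    (f.comp (C a * X)).coeff d = f.coeff d * a ^ d := by
  induction f using Polynomial.induction_on' with
  | add p q hp hq => simp [add_comp, hp, hq, add_mul]
  | monomial e c =>
    rw [monomial_comp, mul_pow, ← C_pow, ← mul_assoc, ← C_mul, coeff_C_mul_X_pow, coeff_monomial]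
    by_cases h : e = d
    · simp [h]
    · simp [h, Ne.symm h]

private lemma range_sum_le_of_card : ∀ (n : ℕ) (S : Finset ℕ), S.card = n →
    (∑ i ∈ range n, i) ≤ ∑ i ∈ S, i ∧ (∑ i ∈ S, i = ∑ i ∈ range n, i → S = range n) := by
  intro n
  induction n with
  | zero => intro S hS; simp [Finset.card_eq_zero.1 hS]
  | succ n ih =>
    intro S hS
    have hne : S.Nonempty := by rw [← Finset.card_pos, hS]; omega
    have hMem := S.max'_mem hne
    set M := S.max' hne with hMdef
    have hsub : S ⊆ range (M + 1) := fun x hx => mem_range.2 (Nat.lt_succ_of_le (S.le_max' x hx))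
    have hM : n ≤ M := by
      have := Finset.card_le_card hsub
      rw [hS, Finset.card_range] at this; omega
    have hcard : (S.erase M).card = n := by
      rw [Finset.card_erase_of_mem hMem, hS]
      omega
    obtain ⟨h1, h2⟩ := ih (S.erase M) hcard
    have hsum : ∑ i ∈ S, i = M + ∑ i ∈ S.erase M, i := by
      rw [← Finset.add_sum_erase S _ hMem]
    rw [Finset.sum_range_succ]
    constructor
    · omega
    · intro he
      have hMn : M = n := by omega
      have he2 : ∑ i ∈ S.erase M, i = ∑ i ∈ range n, i := by omega
      rw [Finset.range_add_one, ← h2 he2, ← hMn]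
      exact (Finset.insert_erase hMem).symm

private lemma sum_le_of_injective {n : ℕ} (k : Fin n → ℕ) (hk : Function.Injective k) :
    (∑ i : Fin n, (i : ℕ)) ≤ ∑ i, k i := by
  have hcard : (Finset.image k Finset.univ).card = n := by
    rw [Finset.card_image_of_injective _ hk, Finset.card_univ, Fintype.card_fin]
  have := (range_sum_le_of_card n _ hcard).1
  rw [Finset.sum_image (fun a _ b _ h => hk h)] at this
  calc (∑ i : Fin n, (i : ℕ)) = ∑ i ∈ range n, i :=
        Fin.sum_univ_eq_sum_range (fun i => i) n
    _ ≤ _ := this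

private lemma exists_perm_of_injective {n : ℕ} (k : Fin n → ℕ) (hk : Function.Injective k)
    (hsum : ∑ i, k i = ∑ i : Fin n, (i : ℕ)) :
    ∃ τ : Equiv.Perm (Fin n), ∀ i, k i = (τ i : ℕ) := by
  have hcard : (Finset.image k Finset.univ).card = n := by
    rw [Finset.card_image_of_injective _ hk, Finset.card_univ, Fintype.card_fin]
  have himg : Finset.image k Finset.univ = range n := by
    refine (range_sum_le_of_card n _ hcard).2 ?_
    rw [Finset.sum_image (fun a _ b _ h => hk h), hsum]
    exact Fin.sum_univ_eq_sum_range (fun i => i) n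
  have hlt : ∀ i, k i < n := fun i => mem_range.1 (himg ▸ Finset.mem_image_of_mem k (Finset.mem_univ i))
  let k' : Fin n → Fin n := fun i => ⟨k i, hlt i⟩
  have hk' : Function.Injective k' := fun x y h => hk (congrArg Fin.val h)
  exact ⟨Equiv.ofBijective k' ((Fintype.bijective_iff_injective_and_card k').2 ⟨hk', rfl⟩),
    fun i => rfl⟩

private lemma det_eval_eq {n : ℕ} (q : Fin n → ℚ[X]) (k : Fin n → ℕ) (w : Fin n → ℚ)
    (hdeg : ∀ i, (q i).natDegree ≤ k i) (hsum : ∑ i, k i ≤ ∑ i : Fin n, (i : ℕ)) :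
    (Matrix.of fun i j => (q i).eval (w j)).det
      = (∏ i, (q i).coeff (k i)) * (Matrix.of fun i j => w j ^ (k i)).det := by
  classical
  have expand : (Matrix.of fun i j => (q i).eval (w j)).det
      = ∑ d ∈ Fintype.piFinset (fun i => range (k i + 1)),
          (∏ i, (q i).coeff (d i)) * (Matrix.of fun i j => w j ^ (d i)).det := by
    have h1 : (Matrix.of fun i j => (q i).eval (w j)).det
        = Matrix.detRowAlternating.toMultilinearMap
            (fun i => ∑ d ∈ range (k i + 1), (q i).coeff d • (fun j => w j ^ d)) := by
      congr 1
      funext i j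
      rw [Finset.sum_apply]
      simp only [Pi.smul_apply, smul_eq_mul]
      exact Polynomial.eval_eq_sum_range' (Nat.lt_succ_of_le (hdeg i)) (w j)
    rw [h1]
    rw [Matrix.detRowAlternating.toMultilinearMap.map_sum_finset
      (fun i d => (q i).coeff d • (fun j => w j ^ d)) (fun i => range (k i + 1))]
    refine Finset.sum_congr rfl fun d _ => ?_
    rw [Matrix.detRowAlternating.toMultilinearMap.map_smul_univ
      (fun i => (q i).coeff (d i)) (fun i => (fun j => w j ^ (d i)))]
    rw [smul_eq_mul]
    rfl
  rw [expand]
  refine Finset.sum_eq_single_of_mem k ?_ ?_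
  · exact Fintype.mem_piFinset.2 fun i => mem_range.2 (Nat.lt_succ_self _)
  · intro d hd hne
    by_cases hinj : Function.Injective d
    · exfalso
      have h1 := sum_le_of_injective d hinj
      have hle : ∀ i, d i ≤ k i := fun i =>
        Nat.lt_succ_iff.1 (mem_range.1 (Fintype.mem_piFinset.1 hd i))
      obtain ⟨i0, hi0⟩ : ∃ i, d i ≠ k i := Function.ne_iff.1 hne
      have : ∑ i, d i < ∑ i, k i :=
        Finset.sum_lt_sum (fun i _ => hle i) ⟨i0, Finset.mem_univ _, lt_of_le_of_ne (hle i0) hi0⟩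
      omega
    · obtain ⟨i1, i2, heq, hne12⟩ : ∃ i1 i2, d i1 = d i2 ∧ i1 ≠ i2 := by
        simp only [Function.Injective, not_forall] at hinj
        obtain ⟨a, b, h1, h2⟩ := hinj
        exact ⟨a, b, h1, h2⟩
      have : (Matrix.of fun i j => w j ^ (d i)).det = 0 :=
        Matrix.det_zero_of_row_eq hne12 (funext fun j => by simp [heq])
      rw [this, mul_zero]

private lemma det_choose {n : ℕ} (a b : Fin n → ℕ) (k : Fin n → ℕ)
    (hsum : ∑ i, k i ≤ ∑ i : Fin n, (i : ℕ)) :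
    (Matrix.of fun i j : Fin n => ((a i * b j).choose (k i) : ℚ)).det
      = (∏ i, (((k i).factorial : ℚ)⁻¹ * (a i : ℚ) ^ (k i)))
        * (Matrix.of fun i j => (b j : ℚ) ^ (k i)).det := by
  set q : Fin n → ℚ[X] :=
    fun i => (((k i).factorial : ℚ)⁻¹) • ((descPochhammer ℚ (k i)).comp (C (a i : ℚ) * X)) with hq
  have heval : ∀ i j, (q i).eval ((b j : ℚ)) = ((a i * b j).choose (k i) : ℚ) := by
    intro i j
    rw [hq]
    simp only [eval_smul, eval_comp, eval_mul, eval_C, eval_X, smul_eq_mul]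
    rw [show ((a i : ℚ) * (b j : ℚ)) = ((a i * b j : ℕ) : ℚ) by push_cast; ring,
      descPochhammer_eval_eq_descFactorial, Nat.descFactorial_eq_factorial_mul_choose,
      Nat.cast_mul]
    rw [← mul_assoc, inv_mul_cancel₀ (by exact_mod_cast (Nat.factorial_pos (k i)).ne'), one_mul]
  have hdeg : ∀ i, (q i).natDegree ≤ k i := by
    intro i
    refine le_trans (natDegree_smul_le _ _) (le_trans natDegree_comp_le ?_)
    calc (descPochhammer ℚ (k i)).natDegree * (C (a i : ℚ) * X).natDegree
        ≤ (k i) * 1 := by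
          refine Nat.mul_le_mul (le_of_eq (descPochhammer_natDegree (R := ℚ) (k i))) ?_
          calc (C (a i : ℚ) * X).natDegree ≤ (C (a i : ℚ)).natDegree + X.natDegree :=
                natDegree_mul_le
            _ ≤ 1 := by simp
      _ = k i := mul_one _
  have hcoeff : ∀ i, (q i).coeff (k i) = ((k i).factorial : ℚ)⁻¹ * (a i : ℚ) ^ (k i) := by
    intro i
    rw [hq]
    simp only [coeff_smul, smul_eq_mul]
    rw [coeff_comp_C_mul_X]
    have h1 : (descPochhammer ℚ (k i)).coeff (k i) = 1 := by
      have := (monic_descPochhammer ℚ (k i)).leadingCoeff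
      rwa [leadingCoeff, descPochhammer_natDegree (R := ℚ) (k i)] at this
    rw [h1, one_mul]
  have : (Matrix.of fun i j : Fin n => ((a i * b j).choose (k i) : ℚ))
      = (Matrix.of fun i j => (q i).eval ((b j : ℚ))) := by
    ext i j; rw [Matrix.of_apply, Matrix.of_apply, heval]
  rw [this, det_eval_eq q k _ hdeg hsum]
  congr 1
  exact Finset.prod_congr rfl fun i _ => hcoeff i

private lemma det_shift_expand {n : ℕ} (a b : Fin n → ℕ) (K : ℕ) (hK : ∀ i j, a i * b j < K)
    (c : ℕ) :
    (Matrix.of fun i j : Fin n => ((X + 1 : ℚ[X]) ^ (a i * b j))).det.coeff c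
      = ∑ k ∈ Fintype.piFinset (fun _ : Fin n => range K),
          (if c = ∑ i, k i
            then (Matrix.of fun i j : Fin n => ((a i * b j).choose (k i) : ℚ)).det else 0) := by
  classical
  have hrow : (Matrix.of fun i j : Fin n => ((X + 1 : ℚ[X]) ^ (a i * b j)))
      = fun i => ∑ kk ∈ range K, (fun j => ((a i * b j).choose kk : ℚ[X]) * X ^ kk) := by
    funext i j
    rw [Finset.sum_apply]
    simp only [Matrix.of_apply]
    rw [add_pow]
    rw [Finset.sum_subset (Finset.range_subset_range.2 (hK i j))
      (fun x _ hx => by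
        rw [Nat.choose_eq_zero_of_lt (by simpa using hx)]
        simp)]
    refine Finset.sum_congr rfl fun kk _ => ?_
    rw [one_pow, mul_one, mul_comm]
  have hdet : (Matrix.of fun i j : Fin n => ((X + 1 : ℚ[X]) ^ (a i * b j))).det
      = ∑ k ∈ Fintype.piFinset (fun _ : Fin n => range K),
          (X : ℚ[X]) ^ (∑ i, k i)
            * C (Matrix.of fun i j : Fin n => ((a i * b j).choose (k i) : ℚ)).det := by
    show Matrix.detRowAlternating.toMultilinearMap
        (Matrix.of fun i j : Fin n => ((X + 1 : ℚ[X]) ^ (a i * b j))) = _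
    rw [hrow]
    rw [Matrix.detRowAlternating.toMultilinearMap.map_sum_finset
      (fun i kk => (fun j => ((a i * b j).choose kk : ℚ[X]) * X ^ kk))
      (fun _ => range K)]
    refine Finset.sum_congr rfl fun k _ => ?_
    have h1 : Matrix.detRowAlternating.toMultilinearMap
          (fun i => (fun j => ((a i * b j).choose (k i) : ℚ[X]) * X ^ (k i)))
        = (Matrix.of fun i j : Fin n =>
            (X : ℚ[X]) ^ (k i) * ((a i * b j).choose (k i) : ℚ[X])).det := by
      show _ = Matrix.detRowAlternating.toMultilinearMap _
      congr 1
      funext i j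
      rw [mul_comm]
      rfl
    have e := Matrix.det_mul_column (fun i => (X : ℚ[X]) ^ (k i))
      (Matrix.of fun i j : Fin n => ((a i * b j).choose (k i) : ℚ[X]))
    simp only [Matrix.of_apply] at e
    rw [h1, e, Finset.prod_pow_eq_pow_sum]
    congr 1
    rw [RingHom.map_det]
    congr 1
  rw [hdet, Polynomial.finset_sum_coeff]
  refine Finset.sum_congr rfl fun k _ => ?_
  rw [mul_comm, coeff_C_mul_X_pow]

private lemma coeff_lt_eq_zero {n : ℕ} (a b : Fin n → ℕ) (K : ℕ) (hK : ∀ i j, a i * b j < K)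
    (c : ℕ) (hc : c < ∑ i : Fin n, (i : ℕ)) :
    (Matrix.of fun i j : Fin n => ((X + 1 : ℚ[X]) ^ (a i * b j))).det.coeff c = 0 := by
  rw [det_shift_expand a b K hK c]
  refine Finset.sum_eq_zero fun k _ => ?_
  split_ifs with h
  · rw [det_choose a b k (by omega)]
    have hninj : ¬ Function.Injective k := fun hinj => by
      have := sum_le_of_injective k hinj; omega
    obtain ⟨i1, i2, heq, hne12⟩ : ∃ i1 i2, k i1 = k i2 ∧ i1 ≠ i2 := by
      simp only [Function.Injective, not_forall] at hninj
      obtain ⟨x, y, h1, h2⟩ := hninj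
      exact ⟨x, y, h1, h2⟩
    rw [Matrix.det_zero_of_row_eq hne12 (funext fun j => by simp [heq]), mul_zero]
  · rfl

private lemma coeff_m_eq {n : ℕ} (a b : Fin n → ℕ) (K : ℕ) (hK : ∀ i j, a i * b j < K)
    (hnK : n ≤ K) :
    (Matrix.of fun i j : Fin n => ((X + 1 : ℚ[X]) ^ (a i * b j))).det.coeff
        (∑ i : Fin n, (i : ℕ))
      = (∏ i : Fin n, ((i : ℕ).factorial : ℚ)⁻¹)
        * ((Matrix.vandermonde fun i => (a i : ℚ)).det
            * (Matrix.vandermonde fun i => (b i : ℚ)).det) := by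
  classical
  rw [det_shift_expand a b K hK _]
  set m := ∑ i : Fin n, (i : ℕ) with hm
  set f : (Fin n → ℕ) → ℚ := fun k =>
    if m = ∑ i, k i
      then (Matrix.of fun i j : Fin n => ((a i * b j).choose (k i) : ℚ)).det else 0 with hf
  set T : Finset (Fin n → ℕ) :=
    Finset.univ.image (fun τ : Equiv.Perm (Fin n) => (fun i => ((τ i : Fin n) : ℕ))) with hT
  have hTsub : T ⊆ Fintype.piFinset (fun _ : Fin n => range K) := by
    intro k hk
    rw [hT, Finset.mem_image] at hk
    obtain ⟨τ, _, rfl⟩ := hk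
    exact Fintype.mem_piFinset.2 fun i => mem_range.2 (lt_of_lt_of_le (τ i).isLt hnK)
  have hzero : ∀ k ∈ Fintype.piFinset (fun _ : Fin n => range K), k ∉ T → f k = 0 := by
    intro k _ hkT
    simp only [hf]
    split_ifs with h
    · rw [det_choose a b k (le_of_eq h.symm)]
      by_cases hinj : Function.Injective k
      · exfalso
        obtain ⟨τ, hτ⟩ := exists_perm_of_injective k hinj h.symm
        exact hkT (by
          rw [hT, Finset.mem_image]
          exact ⟨τ, Finset.mem_univ _, by funext i; exact (hτ i).symm⟩)
      · obtain ⟨i1, i2, heq, hne12⟩ : ∃ i1 i2, k i1 = k i2 ∧ i1 ≠ i2 := by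
          simp only [Function.Injective, not_forall] at hinj
          obtain ⟨x, y, h1, h2⟩ := hinj
          exact ⟨x, y, h1, h2⟩
        rw [Matrix.det_zero_of_row_eq hne12 (funext fun j => by simp [heq]), mul_zero]
    · rfl
  rw [← Finset.sum_subset hTsub hzero]
  rw [hT, Finset.sum_image (by
    intro τ1 _ τ2 _ he
    ext i
    exact congrFun he i)]
  have hterm : ∀ τ : Equiv.Perm (Fin n),
      f (fun i => ((τ i : Fin n) : ℕ))
        = (∏ i : Fin n, ((i : ℕ).factorial : ℚ)⁻¹)
          * ((Matrix.vandermonde fun i => (b i : ℚ)).det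
              * (((Equiv.Perm.sign τ : ℤ) : ℚ) * ∏ i, (a i : ℚ) ^ ((τ i : Fin n) : ℕ))) := by
    intro τ
    simp only [hf]
    have hs : m = ∑ i, ((τ i : Fin n) : ℕ) := (Equiv.sum_comp τ (fun i : Fin n => (i : ℕ))).symm
    rw [if_pos hs, det_choose a b _ (le_of_eq hs.symm)]
    have hperm : (Matrix.of fun i j : Fin n => (b j : ℚ) ^ ((τ i : Fin n) : ℕ)).det
        = ((Equiv.Perm.sign τ : ℤ) : ℚ)
            * (Matrix.vandermonde fun i => (b i : ℚ)).det := by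
      have h3 : (Matrix.of fun i j : Fin n => (b j : ℚ) ^ ((τ i : Fin n) : ℕ))
          = ((Matrix.vandermonde fun i => (b i : ℚ))ᵀ).submatrix τ id := by
        ext i j
        simp [Matrix.vandermonde, Matrix.submatrix]
      rw [h3, Matrix.det_permute, Matrix.det_transpose]
    rw [hperm, Finset.prod_mul_distrib]
    rw [show (∏ i : Fin n, (((τ i : Fin n) : ℕ).factorial : ℚ)⁻¹)
        = ∏ i : Fin n, ((i : ℕ).factorial : ℚ)⁻¹ from
      Equiv.prod_comp τ (fun i : Fin n => ((i : ℕ).factorial : ℚ)⁻¹)]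
    ring
  rw [Finset.sum_congr rfl (fun τ _ => hterm τ), ← Finset.mul_sum, ← Finset.mul_sum]
  congr 1
  rw [mul_comm ((Matrix.vandermonde fun i => (a i : ℚ)).det)]
  congr 1
  have h4 : (Matrix.of fun x y : Fin n => (a y : ℚ) ^ (x : ℕ))
      = (Matrix.vandermonde fun i => (a i : ℚ))ᵀ := by
    ext i j
    simp [Matrix.vandermonde]
  rw [show (Matrix.vandermonde fun i => (a i : ℚ)).det
      = (Matrix.of fun x y : Fin n => (a y : ℚ) ^ (x : ℕ)).det by
    rw [h4, Matrix.det_transpose]]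
  rw [Matrix.det_apply]
  refine Finset.sum_congr rfl fun τ _ => ?_
  rw [Units.smul_def, zsmul_eq_mul]
  simp only [Matrix.of_apply]

/-- Chebotarëv: every square submatrix of the Vandermonde matrix
(ξ^{ij}) at a primitive p-th root of unity is invertible. -/
theorem stmt_15 (p : ℕ) (hp : p.Prime) (ξ : ℂ) (hξ : IsPrimitiveRoot ξ p)
    (n : ℕ) (I J : Fin n → Fin p)
    (hI : Function.Injective I) (hJ : Function.Injective J) :
    (Matrix.of fun i j : Fin n => ξ ^ ((I i : ℕ) * (J j : ℕ))).det ≠ 0 := by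
  classical
  haveI : Fact p.Prime := ⟨hp⟩
  set a : Fin n → ℕ := fun i => (I i : ℕ) with ha
  set b : Fin n → ℕ := fun j => (J j : ℕ) with hb
  have hainj : Function.Injective a := fun x y h => hI (Fin.val_injective h)
  have hbinj : Function.Injective b := fun x y h => hJ (Fin.val_injective h)
  have halt : ∀ i, a i < p := fun i => (I i).isLt
  have hblt : ∀ i, b i < p := fun i => (J i).isLt
  have hnp : n ≤ p := by
    have := Fintype.card_le_of_injective I hI
    simpa using this
  set m : ℕ := ∑ i : Fin n, (i : ℕ) with hm
  set K : ℕ := p * p + n + 1 with hKdef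
  have hK : ∀ i j, a i * b j < K := fun i j =>
    lt_of_le_of_lt (Nat.mul_le_mul (le_of_lt (halt i)) (le_of_lt (hblt j))) (by omega)
  have hnK : n ≤ K := by omega
  -- the integer polynomials
  set Pt : ℤ[X] := (Matrix.of fun i j : Fin n => ((X + 1 : ℤ[X]) ^ (a i * b j))).det with hPt
  have hmap : Pt.map (Int.castRingHom ℚ)
      = (Matrix.of fun i j : Fin n => ((X + 1 : ℚ[X]) ^ (a i * b j))).det := by
    rw [hPt, show (Polynomial.map (Int.castRingHom ℚ) : ℤ[X] → ℚ[X])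
      = (Polynomial.mapRingHom (Int.castRingHom ℚ) : ℤ[X] →+* ℚ[X]) from rfl,
      RingHom.map_det]
    congr 1
    ext i j
    simp [Matrix.map_apply]
  have hcoeff_lt : ∀ c < m, Pt.coeff c = 0 := by
    intro c hc
    have h1 : ((Pt.coeff c : ℤ) : ℚ) = 0 := by
      rw [show ((Pt.coeff c : ℤ) : ℚ) = (Pt.map (Int.castRingHom ℚ)).coeff c by
        rw [Polynomial.coeff_map]; rfl, hmap]
      exact coeff_lt_eq_zero a b K hK c hc
    exact_mod_cast h1
  -- value of the m-th coefficient
  set Va : ℤ := (Matrix.vandermonde fun i => (a i : ℤ)).det with hVa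
  set Vb : ℤ := (Matrix.vandermonde fun i => (b i : ℤ)).det with hVb
  have hVaQ : ((Va : ℤ) : ℚ) = (Matrix.vandermonde fun i => (a i : ℚ)).det := by
    rw [hVa, show (((Matrix.vandermonde fun i => (a i : ℤ)).det : ℤ) : ℚ)
      = (Int.castRingHom ℚ) (Matrix.vandermonde fun i => (a i : ℤ)).det from rfl,
      RingHom.map_det]
    congr 1
    ext i j
    simp [Matrix.map_apply, Matrix.vandermonde]
  have hVbQ : ((Vb : ℤ) : ℚ) = (Matrix.vandermonde fun i => (b i : ℚ)).det := by
    rw [hVb, show (((Matrix.vandermonde fun i => (b i : ℤ)).det : ℤ) : ℚ)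
      = (Int.castRingHom ℚ) (Matrix.vandermonde fun i => (b i : ℤ)).det from rfl,
      RingHom.map_det]
    congr 1
    ext i j
    simp [Matrix.map_apply, Matrix.vandermonde]
  have hcoeff_m : (∏ i : Fin n, ((i : ℕ).factorial : ℤ)) * Pt.coeff m = Va * Vb := by
    have h1 : ((Pt.coeff m : ℤ) : ℚ) = (∏ i : Fin n, ((i : ℕ).factorial : ℚ)⁻¹)
        * ((Matrix.vandermonde fun i => (a i : ℚ)).det
            * (Matrix.vandermonde fun i => (b i : ℚ)).det) := by
      rw [show ((Pt.coeff m : ℤ) : ℚ) = (Pt.map (Int.castRingHom ℚ)).coeff m by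
        rw [Polynomial.coeff_map]; rfl, hmap]
      exact coeff_m_eq a b K hK hnK
    have h2 : (∏ i : Fin n, ((i : ℕ).factorial : ℚ)) * ((Pt.coeff m : ℤ) : ℚ)
        = ((Va : ℚ)) * ((Vb : ℚ)) := by
      rw [h1, hVaQ, hVbQ, ← mul_assoc, ← Finset.prod_mul_distrib]
      have hone : (∏ x : Fin n, (((x : ℕ).factorial : ℚ) * ((x : ℕ).factorial : ℚ)⁻¹)) = 1 := by
        refine Finset.prod_eq_one fun i _ => mul_inv_cancel₀ ?_
        exact_mod_cast (Nat.factorial_pos (i : ℕ)).ne'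
      rw [hone, one_mul]
    have h3 : (((∏ i : Fin n, ((i : ℕ).factorial : ℤ)) * Pt.coeff m : ℤ) : ℚ)
        = ((Va * Vb : ℤ) : ℚ) := by push_cast; push_cast at h2; linarith [h2]
    exact_mod_cast h3
  -- p does not divide the m-th coefficient
  have hpZ : Prime (p : ℤ) := Nat.prime_iff_prime_int.1 hp
  have hVand_not_dvd : ∀ (v : Fin n → ℕ), Function.Injective v → (∀ i, v i < p) →
      ¬ (p : ℤ) ∣ (Matrix.vandermonde fun i => (v i : ℤ)).det := by
    intro v hvinj hvlt hdvd
    rw [Matrix.det_vandermonde] at hdvd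
    obtain ⟨i, _, hi⟩ := (hpZ.dvd_finset_prod_iff _).1 hdvd
    obtain ⟨j, hj, hij⟩ := (hpZ.dvd_finset_prod_iff _).1 hi
    have hji : j ≠ i := fun h => by
      rw [h] at hj; exact absurd (Finset.mem_Ioi.1 hj) (lt_irrefl i)
    have hne : (v j : ℤ) - (v i : ℤ) ≠ 0 := by
      intro h
      exact hji (hvinj (by exact_mod_cast sub_eq_zero.1 h))
    have habs : |(v j : ℤ) - (v i : ℤ)| < (p : ℤ) := by
      have h1 : (v j : ℤ) < p := by exact_mod_cast hvlt j
      have h2 : (v i : ℤ) < p := by exact_mod_cast hvlt i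
      have h3 : (0:ℤ) ≤ (v j : ℤ) := Int.natCast_nonneg _
      have h4 : (0:ℤ) ≤ (v i : ℤ) := Int.natCast_nonneg _
      rw [abs_lt]
      constructor <;> omega
    exact hne (Int.eq_zero_of_abs_lt_dvd hij habs)
  have hc0 : ¬ (p : ℤ) ∣ Pt.coeff m := by
    intro hdvd
    have : (p : ℤ) ∣ Va * Vb := hcoeff_m ▸ hdvd.mul_left _
    rcases hpZ.dvd_mul.1 this with h | h
    · exact hVand_not_dvd a hainj halt h
    · exact hVand_not_dvd b hbinj hblt h
  -- factor out X^m
  have hXdvd : (X : ℤ[X]) ^ m ∣ Pt := Polynomial.X_pow_dvd_iff.2 hcoeff_lt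
  obtain ⟨G, hG⟩ := hXdvd
  -- back to the unshifted polynomial
  set P : ℤ[X] := (Matrix.of fun i j : Fin n => ((X : ℤ[X]) ^ (a i * b j))).det with hPdef
  have hMeq : ((Matrix.of fun i j : Fin n => ((X + 1 : ℤ[X]) ^ (a i * b j))).map
      (aeval (X - 1 : ℤ[X]))) = (Matrix.of fun i j : Fin n => ((X : ℤ[X]) ^ (a i * b j))) := by
    ext i j
    simp [Matrix.map_apply, map_pow, sub_add_cancel]
  have hP : P = aeval (X - 1 : ℤ[X]) Pt := by
    rw [hPt, AlgHom.map_det, AlgHom.mapMatrix_apply, hMeq]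
  set Q : ℤ[X] := aeval (X - 1 : ℤ[X]) G with hQdef
  have hPfact : P = (X - 1) ^ m * Q := by
    rw [hP, hG, _root_.map_mul, _root_.map_pow, aeval_X]
  have hQ1 : Q.eval 1 = Pt.coeff m := by
    have h1 : Q = G.comp (X - 1) := by rw [hQdef, comp_eq_aeval]
    rw [h1, Polynomial.eval_comp]
    simp only [eval_sub, eval_X, eval_one, sub_self]
    rw [← Polynomial.coeff_zero_eq_eval_zero]
    rw [hG]
    simpa using (Polynomial.coeff_X_pow_mul G m 0).symm
  -- evaluation at ξ
  intro hdet0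
  have hdet : (Matrix.of fun i j : Fin n => ξ ^ ((I i : ℕ) * (J j : ℕ))).det = aeval ξ P := by
    rw [hPdef, AlgHom.map_det, AlgHom.mapMatrix_apply]
    congr 1
    ext i j
    simp [Matrix.map_apply, map_pow]
    rfl
  have hξ1 : ξ ≠ 1 := hξ.ne_one hp.one_lt
  have hQ0 : aeval ξ Q = 0 := by
    rw [hdet, hPfact, _root_.map_mul, _root_.map_pow, _root_.map_sub, aeval_X, _root_.map_one] at hdet0
    rcases mul_eq_zero.1 hdet0 with h | h
    · exact absurd h (pow_ne_zero _ (sub_ne_zero.2 hξ1))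
    · exact h
  have hdvd : minpoly ℤ ξ ∣ Q := minpoly.isIntegrallyClosed_dvd (hξ.isIntegral hp.pos) hQ0
  rw [← Polynomial.cyclotomic_eq_minpoly hξ hp.pos] at hdvd
  obtain ⟨R, hR⟩ := hdvd
  have : (p : ℤ) ∣ Pt.coeff m := by
    rw [← hQ1, hR, Polynomial.eval_mul, Polynomial.eval_one_cyclotomic_prime]
    exact Dvd.intro _ rfl
  exact hc0 this
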